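/- For all integers p ≥ 1 and a ≥ b ≥ 1, the separation number of the odd cycle C_{2p+1} is: sep(C_{2p+1}, a, b) = a − b if b ≤ a < 2b; sep(C_{2p+1}, a, b) = b + (p+1)(a−2b) if 2b ≤ a and p(a−2b) ≤ b; and sep(C_{2p+1}, a, b) = a if pa ≥ (2p+1)b. -/

import Mathlib

open SimpleGraph Finset

/-- An `(L,b)`-coloring of `G`: each vertex `v` receives a set `φ v ⊆ L v` with
`|φ v| = b`, and adjacent vertices receive disjoint sets. -/
def IsLbColoring {V : Type*} (G : SimpleGraph V) (L : V → Finset ℕ) (b : ℕ)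
    (φ : V → Finset ℕ) : Prop :=
  (∀ v, φ v ⊆ L v ∧ (φ v).card = b) ∧ ∀ u v, G.Adj u v → φ u ∩ φ v = ∅

/-- `G` is `(a,b,c)`-choosable: every `c`-separating `a`-list assignment admits an
`(L,b)`-coloring. -/
def Choosable {V : Type*} (G : SimpleGraph V) (a b c : ℕ) : Prop :=
  ∀ L : V → Finset ℕ, (∀ v, (L v).card = a) →
    (∀ u v, G.Adj u v → (L u ∩ L v).card ≤ c) →
    ∃ φ, IsLbColoring G L b φ

/-- `G` is `(a,b,c)`-free-choosable: for every `c`-separating `a`-list assignment,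
any precoloring of one vertex by a `b`-subset of its list extends to an `(L,b)`-coloring. -/
def FreeChoosable {V : Type*} (G : SimpleGraph V) (a b c : ℕ) : Prop :=
  ∀ L : V → Finset ℕ, (∀ v, (L v).card = a) →
    (∀ u v, G.Adj u v → (L u ∩ L v).card ≤ c) →
    ∀ (v₀ : V) (C : Finset ℕ), C ⊆ L v₀ → C.card = b →
      ∃ φ, IsLbColoring G L b φ ∧ φ v₀ = C

/-- The separation number `sep(G,a,b)`: the largest `c ≤ a` such that `G` is
`(a,b,c)`-choosable. -/
noncomputable def sep {V : Type*} (G : SimpleGraph V) (a b : ℕ) : ℕ :=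
  sSup {c | c ≤ a ∧ Choosable G a b c}

/-- The free-separation number `fsep(G,a,b)`: the largest `c ≤ a` such that `G` is
`(a,b,c)`-free-choosable. -/
noncomputable def fsep {V : Type*} (G : SimpleGraph V) (a b : ℕ) : ℕ :=
  sSup {c | c ≤ a ∧ FreeChoosable G a b c}

open scoped Fin.CommRing Fin.NatCast


lemma choosable_anti {V : Type*} {G : SimpleGraph V} {a b c c' : ℕ} (h : c' ≤ c)
    (hc : Choosable G a b c) : Choosable G a b c' :=
  fun L h1 h2 => hc L h1 (fun u v huv => le_trans (h2 u v huv) h)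

lemma sep_eq_of {V : Type*} (G : SimpleGraph V) (a b m : ℕ) (hm : m ≤ a)
    (hc : Choosable G a b m) (hmax : ∀ c, c ≤ a → Choosable G a b c → c ≤ m) :
    sep G a b = m := by
  apply le_antisymm
  · exact csSup_le ⟨m, hm, hc⟩ (fun x hx => hmax x hx.1 hx.2)
  · exact le_csSup ⟨a, fun x hx => hx.1⟩ ⟨hm, hc⟩

lemma helper_pick (S T : Finset ℕ) (b m : ℕ) (h1 : b ≤ (S \ T).card + m)
    (h2 : b ≤ S.card) : ∃ β : Finset ℕ, β ⊆ S ∧ β.card = b ∧ (β ∩ T).card ≤ m := by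
  obtain ⟨β₁, hβ₁sub, hβ₁card⟩ : ∃ β₁ ⊆ S \ T, β₁.card = b - m :=
    Finset.exists_subset_card_eq (by omega)
  obtain ⟨β₂, hβ₂sub, hβ₂card⟩ : ∃ β₂ ⊆ S \ β₁, β₂.card = b - (b - m) := by
    apply Finset.exists_subset_card_eq
    have : β₁ ⊆ S := hβ₁sub.trans (Finset.sdiff_subset)
    rw [Finset.card_sdiff_of_subset this, hβ₁card]
    omega
  refine ⟨β₁ ∪ β₂, ?_, ?_, ?_⟩
  · exact Finset.union_subset (hβ₁sub.trans Finset.sdiff_subset) (hβ₂sub.trans Finset.sdiff_subset)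
  · rw [Finset.card_union_of_disjoint, hβ₁card, hβ₂card]
    · omega
    · exact Finset.disjoint_left.2 fun x hx hx2 => (Finset.mem_sdiff.1 (hβ₂sub hx2)).2 hx
  · calc ((β₁ ∪ β₂) ∩ T).card ≤ β₂.card := by
          apply Finset.card_le_card
          intro x hx
          rcases Finset.mem_inter.1 hx with ⟨hx1, hx2⟩
          rcases Finset.mem_union.1 hx1 with h | h
          · exact absurd hx2 (Finset.mem_sdiff.1 (hβ₁sub h)).2
          · exact h
        _ ≤ m := by omega

lemma cycle_adj_iff {n : ℕ} [NeZero n] (hn : 2 ≤ n) {u v : Fin n} :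
    (cycleGraph n).Adj u v ↔ u = v + 1 ∨ v = u + 1 := by
  rw [cycleGraph_adj']
  have h1 : ((1 : Fin n)).val = 1 := Fin.val_one' n |>.trans (Nat.mod_eq_of_lt hn)
  have key : ∀ a c : Fin n, (a - c).val = 1 ↔ a = c + 1 := by
    intro a c
    constructor
    · intro h
      have : a - c = 1 := Fin.ext (by rw [h1]; exact h)
      rw [sub_eq_iff_eq_add] at this
      rw [this, add_comm]
    · intro h
      rw [h]
      have : c + 1 - c = 1 := by ring
      rw [this, h1]
  rw [key, key]

lemma cycle_adj_succ {n : ℕ} [NeZero n] (hn : 2 ≤ n) (v : Fin n) :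
    (cycleGraph n).Adj v (v + 1) := (cycle_adj_iff hn).2 (Or.inr rfl)


/-- Orientation trick: if `c + b ≤ a` then any cyclically-listed assignment is colorable. -/
lemma colorable_easy {n : ℕ} [NeZero n] (a b c : ℕ) (hcb : c + b ≤ a)
    (L : Fin n → Finset ℕ) (hcard : ∀ v, (L v).card = a)
    (hint : ∀ v : Fin n, (L v ∩ L (v + 1)).card ≤ c) :
    ∃ φ : Fin n → Finset ℕ, (∀ v, φ v ⊆ L v ∧ (φ v).card = b) ∧
      ∀ v, φ v ∩ φ (v + 1) = ∅ := by
  have h : ∀ v : Fin n, ∃ s, s ⊆ L v \ L (v + 1) ∧ s.card = b := by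
    intro v
    apply Finset.exists_subset_card_eq
    have h1 := Finset.card_sdiff_add_card_inter (L v) (L (v+1))
    have h2 := hint v
    have h3 := hcard v
    omega
  choose φ hφ using h
  refine ⟨φ, fun v => ⟨(hφ v).1.trans Finset.sdiff_subset, (hφ v).2⟩, fun v => ?_⟩
  apply Finset.eq_empty_of_forall_notMem
  intro x hx
  rcases Finset.mem_inter.1 hx with ⟨h1, h2⟩
  exact (Finset.mem_sdiff.1 ((hφ v).1 h1)).2 (((hφ (v+1)).1.trans Finset.sdiff_subset) h2)

/-- Main sufficiency lemma for odd cycles. -/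
lemma colorable_main (p b d : ℕ) (hp : 1 ≤ p)
    (L : Fin (2*p+1) → Finset ℕ)
    (hcard : ∀ v, (L v).card = 2*b + d)
    (hint : ∀ v : Fin (2*p+1), (L v ∩ L (v+1)).card ≤ b + (p+1)*d) :
    ∃ φ : Fin (2*p+1) → Finset ℕ, (∀ v, φ v ⊆ L v ∧ (φ v).card = b) ∧
      ∀ v, φ v ∩ φ (v+1) = ∅ := by
  haveI : NeZero (2*p+1) := ⟨by omega⟩
  have hn : (2*p+1 : ℕ) = 2*p+1 := rfl
  set LN : ℕ → Finset ℕ := fun k => L ((k : ℕ) : Fin (2*p+1)) with hLN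
  have hLNcard : ∀ k, (LN k).card = 2*b + d := fun k => hcard _
  have hLNsucc : ∀ k : ℕ, LN (k+1) = L (((k : ℕ) : Fin (2*p+1)) + 1) := by
    intro k
    simp only [hLN, Nat.cast_add, Nat.cast_one]
  have hLNint : ∀ k : ℕ, (LN k ∩ LN (k+1)).card ≤ b + (p+1)*d := by
    intro k
    rw [hLNsucc k]
    exact hint _
  have hwrap : LN (2*p+1) = LN 0 := by
    simp only [hLN, Fin.natCast_self, Nat.cast_zero]
  -- choose the color set C at vertex 0 with small intersection with L (2p)
  obtain ⟨C, hCsub, hCcard, hCγ⟩ :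
      ∃ C : Finset ℕ, C ⊆ LN 0 ∧ C.card = b ∧ (C ∩ LN (2*p)).card ≤ p*d := by
    apply helper_pick (LN 0) (LN (2*p)) b (p*d)
    · have e1 := Finset.card_sdiff_add_card_inter (LN 0) (LN (2*p))
      have e2 : (LN 0 ∩ LN (2*p)).card ≤ b + (p+1)*d := by
        rw [Finset.inter_comm]
        have := hLNint (2*p)
        rwa [hwrap] at this
      have e3 := hLNcard 0
      have e4 : (p+1)*d = p*d + d := by ring
      rw [e4] at e2
      generalize p*d = S at e2 ⊢
      omega
    · rw [hLNcard 0]; omega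
  -- main induction along the path
  have key : ∀ k : ℕ, 1 ≤ k →
      ∃ (Y : Finset ℕ) (m : ℕ), Y ⊆ LN k ∧
        ((k-1)/2)*d ≤ m ∧
        Y.card + (k/2)*d ≤ m + b + d ∧
        (∀ β : Finset ℕ, β ⊆ LN k → β.card = b → (β ∩ Y).card ≤ m →
          ∃ φ : ℕ → Finset ℕ, φ 0 = C ∧ (∀ i, i ≤ k → φ i ⊆ LN i ∧ (φ i).card = b) ∧
            (∀ i, i < k → φ i ∩ φ (i+1) = ∅) ∧ φ k = β) := by
    intro k hk
    induction k with
    | zero => omega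
    | succ k ih =>
      rcases Nat.eq_or_lt_of_le hk with h1 | h1
      · -- base case k+1 = 1
        have hk0 : k = 0 := by omega
        subst hk0
        refine ⟨C ∩ LN 1, 0, Finset.inter_subset_right, by simp, ?_, ?_⟩
        · have : (C ∩ LN 1).card ≤ b := le_trans (Finset.card_le_card Finset.inter_subset_left) (le_of_eq hCcard)
          simpa using by omega
        · intro β hβsub hβcard hβY
          have hβC : β ∩ C = ∅ := by
            apply Finset.eq_empty_of_forall_notMem
            intro x hx
            rcases Finset.mem_inter.1 hx with ⟨h2, h3⟩
            have hmem : x ∈ β ∩ (C ∩ LN 1) := by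
              rw [Finset.mem_inter, Finset.mem_inter]
              exact ⟨h2, h3, hβsub h2⟩
            have hemp : β ∩ (C ∩ LN 1) = ∅ := Finset.card_eq_zero.mp (Nat.le_zero.mp hβY)
            rw [hemp] at hmem
            exact absurd hmem (Finset.notMem_empty x)
          refine ⟨fun i => if i = 0 then C else β, by simp, ?_, ?_, by simp⟩
          · intro i hi
            interval_cases i
            · simpa using ⟨hCsub, hCcard⟩
            · simpa using ⟨hβsub, hβcard⟩
          · intro i hi
            have : i = 0 := by omega
            subst this
            simpa [Finset.inter_comm] using hβC
      · -- inductive step: k ≥ 1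
        obtain ⟨Y, m, hY, hA, hB, hACH⟩ := ih (by omega)
        have hy_le : Y.card ≤ m + b + d := by
          have h0 : 0 ≤ (k/2)*d := Nat.zero_le _
          omega
        refine ⟨(LN k \ Y) ∩ LN (k+1), m + (b + d) - Y.card, Finset.inter_subset_right, ?_, ?_, ?_⟩
        · -- invariant A
          have e : (k+1-1)/2 = k/2 := by omega
          rw [e]
          generalize (k/2)*d = S at hB ⊢
          omega
        · -- invariant B
          have hYc : ((LN k \ Y) ∩ LN (k+1)).card + Y.card ≤ 2*b + d := by
            have h1 : ((LN k \ Y) ∩ LN (k+1)).card ≤ (LN k \ Y).card :=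
              Finset.card_le_card Finset.inter_subset_left
            have h2 : (LN k \ Y).card = (LN k).card - Y.card := Finset.card_sdiff_of_subset hY
            have h3 := hLNcard k
            have h4 : Y.card ≤ (LN k).card := Finset.card_le_card hY
            omega
          have e : (k+1)/2 = (k-1)/2 + 1 := by omega
          rw [e, add_mul, one_mul]
          generalize ((k-1)/2)*d = T at hA ⊢
          omega
        · -- achievability
          intro β hβsub hβcard hβY
          obtain ⟨ψ, hψsub, hψcard, hψY⟩ :
              ∃ ψ : Finset ℕ, ψ ⊆ LN k \ β ∧ ψ.card = b ∧ (ψ ∩ Y).card ≤ m := by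
            apply helper_pick (LN k \ β) Y b m
            · -- b ≤ ((LN k \ β) \ Y).card + m
              have hP : (LN k \ β) \ Y = (LN k \ Y) \ β := by
                ext x
                simp only [Finset.mem_sdiff]
                tauto
              rw [hP]
              have e1 := Finset.card_sdiff_add_card_inter (LN k \ Y) β
              have e2 : (LN k \ Y).card + Y.card = 2*b + d := by
                have := Finset.card_sdiff_of_subset hY
                have h4 : Y.card ≤ (LN k).card := Finset.card_le_card hY
                have := hLNcard k
                omega
              have e3 : ((LN k \ Y) ∩ β).card ≤ (β ∩ ((LN k \ Y) ∩ LN (k+1))).card := by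
                apply Finset.card_le_card
                intro x hx
                rcases Finset.mem_inter.1 hx with ⟨h5, h6⟩
                rw [Finset.mem_inter, Finset.mem_inter]
                exact ⟨h6, h5, hβsub h6⟩
              omega
            · have e1 := Finset.card_sdiff_add_card_inter (LN k) β
              have e2 : (LN k ∩ β).card ≤ b := by
                rw [← hβcard]
                exact Finset.card_le_card Finset.inter_subset_right
              have := hLNcard k
              omega
          obtain ⟨φ, hφ0, hφsub, hφdisj, hφk⟩ :=
            hACH ψ (hψsub.trans Finset.sdiff_subset) hψcard hψY
          refine ⟨Function.update φ (k+1) β, ?_, ?_, ?_, ?_⟩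
          · rw [Function.update_of_ne (by omega)]
            exact hφ0
          · intro i hi
            rcases Nat.eq_or_lt_of_le hi with h2 | h2
            · rw [h2, Function.update_self]
              exact ⟨hβsub, hβcard⟩
            · rw [Function.update_of_ne (by omega)]
              exact hφsub i (by omega)
          · intro i hi
            rcases Nat.eq_or_lt_of_le (Nat.succ_le_of_lt hi) with h2 | h2
            · -- i + 1 = k + 1
              have : i = k := by omega
              subst this
              rw [Function.update_of_ne (by omega), Function.update_self, hφk]
              apply Finset.eq_empty_of_forall_notMem
              intro x hx
              rcases Finset.mem_inter.1 hx with ⟨h5, h6⟩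
              exact (Finset.mem_sdiff.1 (hψsub h5)).2 h6
            · rw [Function.update_of_ne (by omega), Function.update_of_ne (by omega)]
              exact hφdisj i (by omega)
          · rw [Function.update_self]
  -- final assembly
  obtain ⟨Y, m, hY, hA, hB, hACH⟩ := key (2*p) (by omega)
  have hB' : Y.card + p*d ≤ m + b + d := by
    have e : (2*p)/2 = p := by omega
    rwa [e] at hB
  obtain ⟨β, hβsub, hβcard, hβY⟩ :
      ∃ β : Finset ℕ, β ⊆ LN (2*p) \ C ∧ β.card = b ∧ (β ∩ Y).card ≤ m := by
    apply helper_pick (LN (2*p) \ C) Y b m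
    · have hP : ((LN (2*p) \ C) \ Y).card + ((LN (2*p) \ C) ∩ Y).card = (LN (2*p) \ C).card :=
        Finset.card_sdiff_add_card_inter _ _
      have e1 := Finset.card_sdiff_add_card_inter (LN (2*p)) C
      have e2 : (LN (2*p) ∩ C).card ≤ p*d := by
        rw [Finset.inter_comm]; exact hCγ
      have e3 : ((LN (2*p) \ C) ∩ Y).card ≤ Y.card :=
        Finset.card_le_card Finset.inter_subset_right
      have e4 := hLNcard (2*p)
      generalize p*d = S at e2 hB' ⊢
      omega
    · have e1 := Finset.card_sdiff_add_card_inter (LN (2*p)) C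
      have e2 : (LN (2*p) ∩ C).card ≤ b := by
        rw [← hCcard]
        exact Finset.card_le_card Finset.inter_subset_right
      have := hLNcard (2*p)
      omega
  obtain ⟨φ, hφ0, hφsub, hφdisj, hφk⟩ :=
    hACH β (hβsub.trans Finset.sdiff_subset) hβcard hβY
  refine ⟨fun v => φ v.val, ?_, ?_⟩
  · intro v
    have h1 := hφsub v.val (by omega)
    have h2 : LN v.val = L v := by
      simp only [hLN, Fin.cast_val_eq_self]
    rw [h2] at h1
    exact h1
  · intro v
    by_cases hv : v.val < 2*p
    · have hval : (v + 1).val = v.val + 1 := by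
        have h3 : ((v.val + 1 : ℕ) : Fin (2*p+1)) = v + 1 := by
          push_cast [Fin.cast_val_eq_self]
          rfl
        rw [← h3, Fin.val_natCast]
        apply Nat.mod_eq_of_lt
        omega
      show φ v.val ∩ φ (v+1).val = ∅
      rw [hval]
      exact hφdisj v.val hv
    · have hv2 : v.val = 2*p := by omega
      have hvlast : v + 1 = 0 := by
        have h3 : ((v.val : ℕ) : Fin (2*p+1)) = v := Fin.cast_val_eq_self v
        rw [← h3, hv2]
        have h4 : ((2*p : ℕ) : Fin (2*p+1)) + 1 = ((2*p + 1 : ℕ) : Fin (2*p+1)) := by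
          push_cast
          rfl
        rw [h4, Fin.natCast_self]
      show φ v.val ∩ φ (v+1).val = ∅
      rw [hvlast, hv2]
      simp only [Fin.val_zero]
      rw [hφk, hφ0]
      apply Finset.eq_empty_of_forall_notMem
      intro x hx
      rcases Finset.mem_inter.1 hx with ⟨h5, h6⟩
      exact (Finset.mem_sdiff.1 (hβsub h5)).2 h6


/-- the family of colors with residue `f` mod `N`, of size `s` -/
def famset (N f s : ℕ) : Finset ℕ := (Finset.range s).image (fun t => f + N*t)

lemma famset_card (N f s : ℕ) (hN : 1 ≤ N) : (famset N f s).card = s := by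
  rw [famset, Finset.card_image_of_injective, Finset.card_range]
  intro x y hxy
  simp only at hxy
  have : N*x = N*y := by omega
  exact Nat.eq_of_mul_eq_mul_left hN this

lemma famset_mod {N f s x : ℕ} (hf : f < N) (hx : x ∈ famset N f s) : x % N = f := by
  rw [famset, Finset.mem_image] at hx
  obtain ⟨t, _, rfl⟩ := hx
  rw [Nat.add_mul_mod_self_left]
  exact Nat.mod_eq_of_lt hf

lemma famset_mem {N f s x : ℕ} : x ∈ famset N f s ↔ ∃ t < s, f + N*t = x := by
  rw [famset, Finset.mem_image]
  simp [Finset.mem_range]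

lemma famset_disj {N f f' s s' : ℕ} (hf : f < N) (hf' : f' < N) (hne : f ≠ f') {x : ℕ}
    (h1 : x ∈ famset N f s) (h2 : x ∈ famset N f' s') : False := by
  have := famset_mod hf h1
  have := famset_mod hf' h2
  omega

/-- counting master lemma -/
lemma count_master {n : ℕ} [NeZero n] (φ : Fin n → Finset ℕ) (b : ℕ)
    (hφcard : ∀ v, (φ v).card = b) (U : Finset ℕ) (hsub : ∀ v, φ v ⊆ U)
    (cap : ℕ → ℕ)
    (hcap : ∀ x ∈ U, (Finset.univ.filter (fun v : Fin n => x ∈ φ v)).card ≤ cap x) :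
    n * b ≤ ∑ x ∈ U, cap x := by
  have h1 : ∀ v : Fin n, (φ v).card = ∑ x ∈ U, (if x ∈ φ v then 1 else 0) := by
    intro v
    rw [← Finset.card_filter]
    congr 1
    rw [Finset.filter_mem_eq_inter]
    exact (Finset.inter_eq_right.2 (hsub v)).symm
  calc n * b = ∑ _v : Fin n, b := by rw [Finset.sum_const, Finset.card_univ, Fintype.card_fin, smul_eq_mul]
    _ = ∑ v : Fin n, (φ v).card := by simp [hφcard]
    _ = ∑ v : Fin n, ∑ x ∈ U, (if x ∈ φ v then 1 else 0) := by simp [h1]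
    _ = ∑ x ∈ U, ∑ v : Fin n, (if x ∈ φ v then 1 else 0) := Finset.sum_comm
    _ = ∑ x ∈ U, (Finset.univ.filter (fun v : Fin n => x ∈ φ v)).card := by
        apply Finset.sum_congr rfl
        intro x _
        rw [Finset.card_filter]
    _ ≤ ∑ x ∈ U, cap x := Finset.sum_le_sum hcap

/-- a color used only on two adjacent vertices (or fewer) is used at most once -/
lemma usage_le_one {n : ℕ} [NeZero n] (φ : Fin n → Finset ℕ)
    (hdisj : ∀ v : Fin n, φ v ∩ φ (v+1) = ∅) (x : ℕ) (i : Fin n)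
    (hsupp : ∀ v, x ∈ φ v → v = i ∨ v = i + 1) :
    (Finset.univ.filter (fun v : Fin n => x ∈ φ v)).card ≤ 1 := by
  by_cases hx : x ∈ φ i
  · have : Finset.univ.filter (fun v : Fin n => x ∈ φ v) ⊆ {i} := by
      intro v hv
      rw [Finset.mem_filter] at hv
      rcases hsupp v hv.2 with h | h
      · simp [h]
      · exfalso
        have : x ∈ φ i ∩ φ (i + 1) := Finset.mem_inter.2 ⟨hx, h ▸ hv.2⟩
        rw [hdisj i] at this
        exact absurd this (Finset.notMem_empty x)
    exact le_trans (Finset.card_le_card this) (by simp)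
  · have : Finset.univ.filter (fun v : Fin n => x ∈ φ v) ⊆ {i+1} := by
      intro v hv
      rw [Finset.mem_filter] at hv
      rcases hsupp v hv.2 with h | h
      · exact absurd (h ▸ hv.2) hx
      · simp [h]
    exact le_trans (Finset.card_le_card this) (by simp)

/-- independent-usage bound: any color is used on at most `p` vertices of `C_{2p+1}` -/
lemma usage_le_p {p : ℕ} (φ : Fin (2*p+1) → Finset ℕ)
    (hdisj : ∀ v : Fin (2*p+1), φ v ∩ φ (v+1) = ∅) (x : ℕ) :
    (Finset.univ.filter (fun v : Fin (2*p+1) => x ∈ φ v)).card ≤ p := by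
  haveI : NeZero (2*p+1) := ⟨by omega⟩
  set S := Finset.univ.filter (fun v : Fin (2*p+1) => x ∈ φ v) with hS
  have hSprop : ∀ v ∈ S, v + 1 ∉ S := by
    intro v hv hv1
    rw [hS, Finset.mem_filter] at hv hv1
    have : x ∈ φ v ∩ φ (v + 1) := Finset.mem_inter.2 ⟨hv.2, hv1.2⟩
    rw [hdisj v] at this
    exact absurd this (Finset.notMem_empty x)
  set T := S.image (fun v => v + 1) with hT
  have hTcard : T.card = S.card := Finset.card_image_of_injective S (add_left_injective 1)
  have hdisjST : Disjoint S T := by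
    rw [Finset.disjoint_right]
    intro v hvT hvS
    rw [hT, Finset.mem_image] at hvT
    obtain ⟨u, huS, rfl⟩ := hvT
    exact hSprop u huS hvS
  have := Finset.card_union_of_disjoint hdisjST
  have hle : (S ∪ T).card ≤ 2*p+1 := by
    have := Finset.card_le_card (Finset.subset_univ (S ∪ T))
    simpa using this
  omega

section FinHelpers
variable {p : ℕ}

lemma fin_one_ne_zero (hp : 1 ≤ p) : (1 : Fin (2*p+1)) ≠ 0 := by
  haveI : NeZero (2*p+1) := ⟨by omega⟩
  intro h
  have := congrArg Fin.val h
  rw [Fin.val_one' (2*p+1), Fin.val_zero, Nat.mod_eq_of_lt (by omega)] at this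
  omega

lemma fin_two_ne_zero (hp : 1 ≤ p) : (2 : Fin (2*p+1)) ≠ 0 := by
  haveI : NeZero (2*p+1) := ⟨by omega⟩
  intro h
  have h2 : ((2:ℕ) : Fin (2*p+1)) = 0 := by
    rw [← h]; norm_cast
  have := congrArg Fin.val h2
  rw [Fin.val_natCast, Fin.val_zero] at this
  rw [Nat.mod_eq_of_lt (by omega)] at this
  omega

lemma fin_sub_one_ne (hp : 1 ≤ p) (v : Fin (2*p+1)) : v - 1 ≠ v := by
  haveI : NeZero (2*p+1) := ⟨by omega⟩
  intro h
  rw [sub_eq_self] at h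
  exact fin_one_ne_zero hp h

lemma fin_sub_one_ne_add_one (hp : 1 ≤ p) (v : Fin (2*p+1)) : v - 1 ≠ v + 1 := by
  haveI : NeZero (2*p+1) := ⟨by omega⟩
  intro h
  have h2 : (v+1) - (v-1) = 0 := by rw [← h]; exact sub_self _
  have h3 : (v+1) - (v-1) = 2 := by ring
  rw [h3] at h2
  exact fin_two_ne_zero hp h2

lemma fin_ne_add_one (hp : 1 ≤ p) (v : Fin (2*p+1)) : v ≠ v + 1 := by
  haveI : NeZero (2*p+1) := ⟨by omega⟩
  intro h
  rw [left_eq_add] at h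
  exact fin_one_ne_zero hp h

lemma fin_val_add_one_lt (v : Fin (2*p+1)) (hv : v.val < 2*p) : (v+1).val = v.val + 1 := by
  haveI : NeZero (2*p+1) := ⟨by omega⟩
  have h3 : ((v.val + 1 : ℕ) : Fin (2*p+1)) = v + 1 := by
    push_cast [Fin.cast_val_eq_self]
    rfl
  rw [← h3, Fin.val_natCast]
  apply Nat.mod_eq_of_lt
  omega

lemma fin_add_one_last (v : Fin (2*p+1)) (hv : v.val = 2*p) : v + 1 = 0 := by
  haveI : NeZero (2*p+1) := ⟨by omega⟩
  have h3 : ((v.val : ℕ) : Fin (2*p+1)) = v := Fin.cast_val_eq_self v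
  rw [← h3, hv]
  have h4 : ((2*p : ℕ) : Fin (2*p+1)) + 1 = ((2*p + 1 : ℕ) : Fin (2*p+1)) := by
    push_cast
    rfl
  rw [h4, Fin.natCast_self]
end FinHelpers

lemma par_sum (A B p : ℕ) :
    ∑ i ∈ Finset.range (2*p+1), (if Even i then A else B) = (p+1)*A + p*B := by
  induction p with
  | zero => simp
  | succ q ih =>
    have h : 2*(q+1)+1 = ((2*q+1) + 1) + 1 := by ring
    rw [h, Finset.sum_range_succ, Finset.sum_range_succ, ih]
    have h1 : ¬ Even (2*q+1) := by simp [Nat.even_add_one, parity_simps]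
    have h2 : Even (2*q+1+1) := by simp [Nat.even_add_one, parity_simps]
    rw [if_neg h1, if_pos h2]
    ring


/-! ### The regime-1 counterexample -/

def B1s (p a b : ℕ) (i : Fin (2*p+1)) : ℕ :=
  if Even i.val then min (b-1) (a-b+1) else a-b+1

def B1L (p a b : ℕ) (v : Fin (2*p+1)) : Finset ℕ :=
  famset (2*(2*p+1)) (v-1).val (B1s p a b (v-1)) ∪ famset (2*(2*p+1)) v.val (B1s p a b v)
    ∪ famset (2*(2*p+1)) ((2*p+1) + v.val) (a - B1s p a b (v-1) - B1s p a b v)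

lemma famset_disjoint {N f f' s s' : ℕ} (hf : f < N) (hf' : f' < N) (hne : f ≠ f') :
    Disjoint (famset N f s) (famset N f' s') :=
  Finset.disjoint_left.2 fun x h1 h2 => hne (by rw [← famset_mod hf h1, famset_mod hf' h2])

lemma B1s_le (p a b : ℕ) (i : Fin (2*p+1)) : B1s p a b i ≤ a - b + 1 := by
  rw [B1s]
  split
  · exact min_le_right _ _
  · exact le_refl _

lemma B1pair (p a b : ℕ) (hp : 1 ≤ p) (hb : 1 ≤ b) (hba : b ≤ a) (u : Fin (2*p+1)) :
    B1s p a b u + B1s p a b (u+1) ≤ a := by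
  haveI : NeZero (2*p+1) := ⟨by omega⟩
  by_cases hval : u.val = 2*p
  · rw [fin_add_one_last u hval]
    simp only [B1s, Fin.val_zero, hval]
    rw [if_pos ⟨p, by ring⟩]
    simp only [Even.zero, ↓reduceIte]
    omega
  · have hlt : u.val < 2*p := by have := u.is_lt; omega
    have hsucc := fin_val_add_one_lt u hlt
    simp only [B1s, hsucc]
    by_cases he : Even u.val
    · have hne : ¬ Even (u.val + 1) := by simp [Nat.even_add_one, he]
      rw [if_pos he, if_neg hne]
      omega
    · have hne : Even (u.val + 1) := by simp [Nat.even_add_one, he]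
      rw [if_neg he, if_pos hne]
      omega

lemma B1pair' (p a b : ℕ) (hp : 1 ≤ p) (hb : 1 ≤ b) (hba : b ≤ a) (v : Fin (2*p+1)) :
    B1s p a b (v-1) + B1s p a b v ≤ a := by
  have := B1pair p a b hp hb hba (v-1)
  rwa [sub_add_cancel] at this

lemma B1card (p a b : ℕ) (hp : 1 ≤ p) (hb : 1 ≤ b) (hba : b ≤ a) (v : Fin (2*p+1)) :
    (B1L p a b v).card = a := by
  haveI : NeZero (2*p+1) := ⟨by omega⟩
  have hv1 : (v-1).val < 2*p+1 := (v-1).is_lt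
  have hv2 : v.val < 2*p+1 := v.is_lt
  have hne12 : (v-1).val ≠ v.val := fun h => fin_sub_one_ne hp v (Fin.val_injective h)
  rw [B1L, Finset.card_union_of_disjoint, Finset.card_union_of_disjoint,
    famset_card _ _ _ (by omega), famset_card _ _ _ (by omega), famset_card _ _ _ (by omega)]
  · have := B1pair' p a b hp hb hba v
    omega
  · exact famset_disjoint (by omega) (by omega) (by omega)
  · refine Finset.disjoint_union_left.2 ⟨?_, ?_⟩
    · exact famset_disjoint (by omega) (by omega) (by omega)
    · exact famset_disjoint (by omega) (by omega) (by omega)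

lemma B1int (p a b : ℕ) (hp : 1 ≤ p) (hb : 1 ≤ b) (hba : b ≤ a) (v : Fin (2*p+1)) :
    (B1L p a b v ∩ B1L p a b (v+1)).card ≤ a - b + 1 := by
  haveI : NeZero (2*p+1) := ⟨by omega⟩
  have hv1 : (v-1).val < 2*p+1 := (v-1).is_lt
  have hv2 : v.val < 2*p+1 := v.is_lt
  have hv3 : (v+1).val < 2*p+1 := (v+1).is_lt
  have hsub : B1L p a b v ∩ B1L p a b (v+1) ⊆ famset (2*(2*p+1)) v.val (B1s p a b v) := by
    intro x hx
    obtain ⟨hx1, hx2⟩ := Finset.mem_inter.1 hx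
    have e : v + 1 - 1 = v := by ring
    rw [B1L] at hx1
    rw [B1L, e] at hx2
    rcases Finset.mem_union.1 hx1 with h1 | h1
    · rcases Finset.mem_union.1 h1 with h1a | h1b
      · -- x in family (v-1).val : impossible
        exfalso
        have m1 := famset_mod (show (v-1).val < 2*(2*p+1) by omega) h1a
        rcases Finset.mem_union.1 hx2 with h2 | h2
        · rcases Finset.mem_union.1 h2 with h2a | h2b
          · have m2 := famset_mod (show v.val < 2*(2*p+1) by omega) h2a
            exact fin_sub_one_ne hp v (Fin.val_injective (m1.symm.trans m2))
          · have m2 := famset_mod (show (v+1).val < 2*(2*p+1) by omega) h2b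
            exact fin_sub_one_ne_add_one hp v (Fin.val_injective (m1.symm.trans m2))
        · have m2 := famset_mod (show (2*p+1) + (v+1).val < 2*(2*p+1) by omega) h2
          clear hx hx1 hx2 e h1 h1a h2
          generalize (v-1).val = A at *
          generalize (v+1).val = B at *
          omega
      · exact h1b
    · -- x in private family of v : impossible
      exfalso
      have m1 := famset_mod (show (2*p+1) + v.val < 2*(2*p+1) by omega) h1
      rcases Finset.mem_union.1 hx2 with h2 | h2
      · rcases Finset.mem_union.1 h2 with h2a | h2b
        · have m2 := famset_mod (show v.val < 2*(2*p+1) by omega) h2a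
          clear hx hx1 hx2 e h1 h2 h2a
          generalize v.val = A at *
          omega
        · have m2 := famset_mod (show (v+1).val < 2*(2*p+1) by omega) h2b
          clear hx hx1 hx2 e h1 h2 h2b
          generalize v.val = A at *
          generalize (v+1).val = B at *
          omega
      · have m2 := famset_mod (show (2*p+1) + (v+1).val < 2*(2*p+1) by omega) h2
        have : v.val = (v+1).val := by
          clear hx hx1 hx2 e h1 h2
          generalize v.val = A at *
          generalize (v+1).val = B at *
          omega
        exact fin_ne_add_one hp v (Fin.val_injective this)
  calc (B1L p a b v ∩ B1L p a b (v+1)).card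
      ≤ (famset (2*(2*p+1)) v.val (B1s p a b v)).card := Finset.card_le_card hsub
    _ = B1s p a b v := famset_card _ _ _ (by omega)
    _ ≤ a - b + 1 := B1s_le p a b v

lemma B1main (p a b : ℕ) (hp : 1 ≤ p) (hb : 1 ≤ b) (hba : b ≤ a) (hab : a < 2*b)
    (φ : Fin (2*p+1) → Finset ℕ) (hφ : ∀ v, φ v ⊆ B1L p a b v ∧ (φ v).card = b)
    (hdisj : ∀ v : Fin (2*p+1), φ v ∩ φ (v+1) = ∅) : False := by
  haveI : NeZero (2*p+1) := ⟨by omega⟩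
  set N := 2*(2*p+1) with hN
  set U : Finset ℕ :=
    (Finset.univ.biUnion (fun i : Fin (2*p+1) => famset N i.val (B1s p a b i))) ∪
    (Finset.univ.biUnion (fun v : Fin (2*p+1) =>
      famset N ((2*p+1) + v.val) (a - B1s p a b (v-1) - B1s p a b v))) with hU
  have hsub : ∀ v, φ v ⊆ U := by
    intro v x hx
    have hx2 := (hφ v).1 hx
    rw [B1L] at hx2
    rw [hU, Finset.mem_union]
    rcases Finset.mem_union.1 hx2 with h1 | h1
    · left
      rcases Finset.mem_union.1 h1 with h1a | h1b
      · exact Finset.mem_biUnion.2 ⟨v-1, Finset.mem_univ _, h1a⟩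
      · exact Finset.mem_biUnion.2 ⟨v, Finset.mem_univ _, h1b⟩
    · right
      exact Finset.mem_biUnion.2 ⟨v, Finset.mem_univ _, h1⟩
  have hcap : ∀ x ∈ U, (Finset.univ.filter (fun v : Fin (2*p+1) => x ∈ φ v)).card ≤ 1 := by
    intro x hxU
    rw [hU, Finset.mem_union] at hxU
    rcases hxU with hx | hx
    · obtain ⟨i, _, hxi⟩ := Finset.mem_biUnion.1 hx
      apply usage_le_one φ hdisj x i
      intro v hv
      have hx2 := (hφ v).1 hv
      rw [B1L] at hx2
      have mi := famset_mod (show i.val < N by have := i.is_lt; omega) hxi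
      rcases Finset.mem_union.1 hx2 with h1 | h1
      · rcases Finset.mem_union.1 h1 with h1a | h1b
        · have m1 := famset_mod (show (v-1).val < N by have := (v-1).is_lt; omega) h1a
          right
          have : v - 1 = i := Fin.val_injective (m1.symm.trans mi)
          rw [← this]
          ring
        · have m1 := famset_mod (show v.val < N by have := v.is_lt; omega) h1b
          left
          exact Fin.val_injective (m1.symm.trans mi)
      · have m1 := famset_mod (show (2*p+1) + v.val < N by have := v.is_lt; omega) h1
        exfalso
        have h5 := i.is_lt
        have h6 := v.is_lt
        clear hx2 hv h1 hxi hx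
        generalize v.val = A at *
        generalize i.val = B at *
        omega
    · obtain ⟨w, _, hxw⟩ := Finset.mem_biUnion.1 hx
      apply usage_le_one φ hdisj x w
      intro v hv
      have hx2 := (hφ v).1 hv
      rw [B1L] at hx2
      have mw := famset_mod (show (2*p+1) + w.val < N by have := w.is_lt; omega) hxw
      rcases Finset.mem_union.1 hx2 with h1 | h1
      · exfalso
        rcases Finset.mem_union.1 h1 with h1a | h1b
        · have m1 := famset_mod (show (v-1).val < N by have := (v-1).is_lt; omega) h1a
          have h5 := (v-1).is_lt
          have h6 := w.is_lt
          clear hx2 hv h1 h1a hxw hx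
          generalize (v-1).val = A at *
          generalize w.val = B at *
          omega
        · have m1 := famset_mod (show v.val < N by have := v.is_lt; omega) h1b
          have h5 := v.is_lt
          have h6 := w.is_lt
          clear hx2 hv h1 h1b hxw hx
          generalize v.val = A at *
          generalize w.val = B at *
          omega
      · have m1 := famset_mod (show (2*p+1) + v.val < N by have := v.is_lt; omega) h1
        left
        apply Fin.val_injective
        clear hx2 hv h1 hxw hx
        generalize hA : v.val = A at *
        generalize hB : w.val = B at *
        omega
  have hcount : (2*p+1) * b ≤ ∑ _x ∈ U, 1 :=
    count_master φ b (fun v => (hφ v).2) U hsub (fun _ => 1) hcap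
  rw [Finset.sum_const, smul_eq_mul, mul_one] at hcount
  -- bound U.card
  have hUcard : U.card ≤ (∑ i : Fin (2*p+1), B1s p a b i) +
      (∑ v : Fin (2*p+1), (a - B1s p a b (v-1) - B1s p a b v)) := by
    rw [hU]
    calc _ ≤ (Finset.univ.biUnion (fun i : Fin (2*p+1) => famset N i.val (B1s p a b i))).card +
        (Finset.univ.biUnion (fun v : Fin (2*p+1) =>
          famset N ((2*p+1) + v.val) (a - B1s p a b (v-1) - B1s p a b v))).card :=
        Finset.card_union_le _ _
      _ ≤ _ := by
        gcongr
        · calc _ ≤ ∑ i : Fin (2*p+1), (famset N i.val (B1s p a b i)).card :=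
              Finset.card_biUnion_le
            _ = _ := by
              apply Finset.sum_congr rfl
              intro i _
              exact famset_card _ _ _ (by omega)
        · calc _ ≤ ∑ v : Fin (2*p+1), (famset N ((2*p+1) + v.val)
              (a - B1s p a b (v-1) - B1s p a b v)).card := Finset.card_biUnion_le
            _ = _ := by
              apply Finset.sum_congr rfl
              intro i _
              exact famset_card _ _ _ (by omega)
  -- sums
  set S := ∑ i : Fin (2*p+1), B1s p a b i with hSdef
  set T := ∑ v : Fin (2*p+1), (a - B1s p a b (v-1) - B1s p a b v) with hTdef
  have hshift : ∑ v : Fin (2*p+1), B1s p a b (v-1) = S := by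
    rw [hSdef]
    exact Equiv.sum_comp (Equiv.subRight (1 : Fin (2*p+1))) (B1s p a b)
  have htotal : S + S + T = (2*p+1) * a := by
    have h1 : ∑ v : Fin (2*p+1),
        (B1s p a b (v-1) + B1s p a b v + (a - B1s p a b (v-1) - B1s p a b v)) = (2*p+1) * a := by
      rw [Finset.sum_congr rfl (fun v _ => by
        have := B1pair' p a b hp hb hba v
        omega : ∀ v ∈ Finset.univ, _ = a)]
      rw [Finset.sum_const, Finset.card_univ, Fintype.card_fin, smul_eq_mul]
    rw [Finset.sum_add_distrib, Finset.sum_add_distrib, hshift] at h1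
    rw [← h1, hSdef, hTdef]
  have hSge : (2*p+1) * (a-b) + 1 ≤ S := by
    have hSval : S = (p+1) * (min (b-1) (a-b+1)) + p * (a-b+1) := by
      rw [hSdef]
      have : ∀ v : Fin (2*p+1), B1s p a b v =
          (fun i : ℕ => if Even i then min (b-1) (a-b+1) else a-b+1) v.val := fun v => rfl
      rw [Finset.sum_congr rfl (fun v _ => this v)]
      rw [Fin.sum_univ_eq_sum_range (fun i : ℕ => if Even i then min (b-1) (a-b+1) else a-b+1)]
      exact par_sum _ _ p
    rw [hSval]
    by_cases hc : a ≤ 2*b - 2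
    · have hmin : min (b-1) (a-b+1) = a-b+1 := min_eq_right (by omega)
      rw [hmin]
      have key : (p+1) * (a-b+1) + p * (a-b+1) = (2*p+1) * (a-b) + (2*p+1) := by
        ring
      rw [key]
      omega
    · have ha2 : a = 2*b - 1 := by omega
      have hmin : min (b-1) (a-b+1) = b-1 := min_eq_left (by omega)
      rw [hmin]
      obtain ⟨c, hc⟩ : ∃ c, b - 1 = c := ⟨_, rfl⟩
      have e1 : a - b = c := by omega
      have e2 : a - b + 1 = c + 1 := by omega
      rw [e1, hc]
      have key : (p+1) * c + p * (c+1) = (2*p+1) * c + p := by ring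
      rw [key]
      omega
  -- final contradiction
  have hmul : (2*p+1) * a = (2*p+1) * b + (2*p+1) * (a-b) := by
    rw [← Nat.mul_add]
    congr 1
    omega
  omega

lemma B1int' (p a b : ℕ) (hp : 1 ≤ p) (hb : 1 ≤ b) (hba : b ≤ a) {u v : Fin (2*p+1)}
    (huv : (cycleGraph (2*p+1)).Adj u v) : (B1L p a b u ∩ B1L p a b v).card ≤ a - b + 1 := by
  haveI : NeZero (2*p+1) := ⟨by omega⟩
  rcases (cycle_adj_iff (by omega)).1 huv with h | h
  · rw [h, Finset.inter_comm]
    exact B1int p a b hp hb hba v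
  · rw [h]
    exact B1int p a b hp hb hba u

/-! ### The regime-2 counterexample -/

def B2L (p b d : ℕ) (v : Fin (2*p+1)) : Finset ℕ :=
  famset (2*p+2) (2*p+1) ((2*p+1)*d + 2) ∪ famset (2*p+2) (v-1).val (b - p*d - 1)
    ∪ famset (2*p+2) v.val (b - p*d - 1)

lemma B2card (p b d : ℕ) (hp : 1 ≤ p) (hσ : p*d + 1 ≤ b) (v : Fin (2*p+1)) :
    (B2L p b d v).card = 2*b + d := by
  haveI : NeZero (2*p+1) := ⟨by omega⟩
  have hv1 : (v-1).val < 2*p+1 := (v-1).is_lt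
  have hv2 : v.val < 2*p+1 := v.is_lt
  have hne12 : (v-1).val ≠ v.val := fun h => fin_sub_one_ne hp v (Fin.val_injective h)
  rw [B2L, Finset.card_union_of_disjoint, Finset.card_union_of_disjoint,
    famset_card _ _ _ (by omega), famset_card _ _ _ (by omega), famset_card _ _ _ (by omega)]
  · have hr : (2*p+1)*d = 2*(p*d) + d := by ring
    generalize p*d = e at *
    omega
  · exact famset_disjoint (by omega) (by omega) (by omega)
  · refine Finset.disjoint_union_left.2 ⟨?_, ?_⟩
    · exact famset_disjoint (by omega) (by omega) (by omega)
    · exact famset_disjoint (by omega) (by omega) (by omega)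

lemma B2int (p b d : ℕ) (hp : 1 ≤ p) (hσ : p*d + 1 ≤ b) (v : Fin (2*p+1)) :
    (B2L p b d v ∩ B2L p b d (v+1)).card ≤ b + (p+1)*d + 1 := by
  haveI : NeZero (2*p+1) := ⟨by omega⟩
  have hv1 : (v-1).val < 2*p+1 := (v-1).is_lt
  have hv2 : v.val < 2*p+1 := v.is_lt
  have hv3 : (v+1).val < 2*p+1 := (v+1).is_lt
  have hsub : B2L p b d v ∩ B2L p b d (v+1) ⊆
      famset (2*p+2) (2*p+1) ((2*p+1)*d + 2) ∪ famset (2*p+2) v.val (b - p*d - 1) := by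
    intro x hx
    obtain ⟨hx1, hx2⟩ := Finset.mem_inter.1 hx
    have e : v + 1 - 1 = v := by ring
    rw [B2L] at hx1
    rw [B2L, e] at hx2
    rw [Finset.mem_union]
    rcases Finset.mem_union.1 hx1 with h1 | h1
    · rcases Finset.mem_union.1 h1 with h1a | h1b
      · exact Or.inl h1a
      · -- x in family (v-1).val : impossible
        exfalso
        have m1 := famset_mod (show (v-1).val < 2*p+2 by omega) h1b
        rcases Finset.mem_union.1 hx2 with h2 | h2
        · rcases Finset.mem_union.1 h2 with h2a | h2b
          · have m2 := famset_mod (show 2*p+1 < 2*p+2 by omega) h2a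
            clear hx hx1 hx2 e h1 h1b h2 h2a
            generalize (v-1).val = A at *
            omega
          · have m2 := famset_mod (show v.val < 2*p+2 by omega) h2b
            exact fin_sub_one_ne hp v (Fin.val_injective (m1.symm.trans m2))
        · have m2 := famset_mod (show (v+1).val < 2*p+2 by omega) h2
          exact fin_sub_one_ne_add_one hp v (Fin.val_injective (m1.symm.trans m2))
    · exact Or.inr h1
  calc (B2L p b d v ∩ B2L p b d (v+1)).card
      ≤ (famset (2*p+2) (2*p+1) ((2*p+1)*d + 2) ∪ famset (2*p+2) v.val (b - p*d - 1)).card :=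
        Finset.card_le_card hsub
    _ ≤ (famset (2*p+2) (2*p+1) ((2*p+1)*d + 2)).card +
        (famset (2*p+2) v.val (b - p*d - 1)).card := Finset.card_union_le _ _
    _ ≤ b + (p+1)*d + 1 := by
        rw [famset_card _ _ _ (by omega), famset_card _ _ _ (by omega)]
        have hr : (2*p+1)*d = 2*(p*d) + d := by ring
        have hr2 : (p+1)*d = p*d + d := by ring
        generalize p*d = e at *
        omega

lemma B2main (p b d : ℕ) (hp : 1 ≤ p) (hσ : p*d + 1 ≤ b)
    (φ : Fin (2*p+1) → Finset ℕ) (hφ : ∀ v, φ v ⊆ B2L p b d v ∧ (φ v).card = b)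
    (hdisj : ∀ v : Fin (2*p+1), φ v ∩ φ (v+1) = ∅) : False := by
  haveI : NeZero (2*p+1) := ⟨by omega⟩
  set K : Finset ℕ := famset (2*p+2) (2*p+1) ((2*p+1)*d + 2) with hK
  set E : Finset ℕ :=
    Finset.univ.biUnion (fun i : Fin (2*p+1) => famset (2*p+2) i.val (b - p*d - 1)) with hE
  have hsub : ∀ v, φ v ⊆ K ∪ E := by
    intro v x hx
    have hx2 := (hφ v).1 hx
    rw [B2L] at hx2
    rw [Finset.mem_union]
    rcases Finset.mem_union.1 hx2 with h1 | h1
    · rcases Finset.mem_union.1 h1 with h1a | h1b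
      · exact Or.inl h1a
      · exact Or.inr (Finset.mem_biUnion.2 ⟨v-1, Finset.mem_univ _, h1b⟩)
    · exact Or.inr (Finset.mem_biUnion.2 ⟨v, Finset.mem_univ _, h1⟩)
  have hcap : ∀ x ∈ K ∪ E, (Finset.univ.filter (fun v : Fin (2*p+1) => x ∈ φ v)).card ≤
      (if x ∈ K then p else 1) := by
    intro x hxU
    by_cases hxK : x ∈ K
    · rw [if_pos hxK]
      exact usage_le_p φ hdisj x
    · rw [if_neg hxK]
      rcases Finset.mem_union.1 hxU with h | h
      · exact absurd h hxK
      · obtain ⟨i, _, hxi⟩ := Finset.mem_biUnion.1 h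
        apply usage_le_one φ hdisj x i
        intro v hv
        have hx2 := (hφ v).1 hv
        rw [B2L] at hx2
        have mi := famset_mod (show i.val < 2*p+2 by have := i.is_lt; omega) hxi
        rcases Finset.mem_union.1 hx2 with h1 | h1
        · rcases Finset.mem_union.1 h1 with h1a | h1b
          · exfalso
            have m1 := famset_mod (show 2*p+1 < 2*p+2 by omega) h1a
            have h5 := i.is_lt
            clear hx2 hv h1 h1a hxi hxU h
            generalize i.val = A at *
            omega
          · have m1 := famset_mod (show (v-1).val < 2*p+2 by have := (v-1).is_lt; omega) h1b
            right
            have : v - 1 = i := Fin.val_injective (m1.symm.trans mi)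
            rw [← this]
            ring
        · have m1 := famset_mod (show v.val < 2*p+2 by have := v.is_lt; omega) h1
          left
          exact Fin.val_injective (m1.symm.trans mi)
  have hcount := count_master φ b (fun v => (hφ v).2) (K ∪ E) hsub
    (fun x => if x ∈ K then p else 1) hcap
  have hsplit : ∑ x ∈ K ∪ E, (if x ∈ K then p else 1) ≤
      ∑ x ∈ K, (if x ∈ K then p else 1) + ∑ x ∈ E, (if x ∈ K then p else 1) := by
    have h := Finset.sum_union_inter (s₁ := K) (s₂ := E) (f := fun x => if x ∈ K then p else 1)
    omega
  have hKsum : ∑ x ∈ K, (if x ∈ K then p else 1) = ((2*p+1)*d + 2) * p := by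
    rw [Finset.sum_congr rfl (fun x hx => if_pos hx), Finset.sum_const, smul_eq_mul,
      hK, famset_card _ _ _ (by omega)]
  have hEsum : ∑ x ∈ E, (if x ∈ K then p else 1) ≤ (2*p+1) * (b - p*d - 1) := by
    calc ∑ x ∈ E, (if x ∈ K then p else 1) ≤ ∑ _x ∈ E, 1 := by
          apply Finset.sum_le_sum
          intro x hxE
          split
          · next hxK =>
            exfalso
            obtain ⟨i, _, hxi⟩ := Finset.mem_biUnion.1 hxE
            have m1 := famset_mod (show 2*p+1 < 2*p+2 by omega) hxK
            have m2 := famset_mod (show i.val < 2*p+2 by have := i.is_lt; omega) hxi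
            have h5 := i.is_lt
            clear hxE hxK hxi
            generalize i.val = A at *
            omega
          · exact le_refl 1
      _ = E.card := by rw [Finset.sum_const, smul_eq_mul, mul_one]
      _ ≤ ∑ i : Fin (2*p+1), (famset (2*p+2) i.val (b - p*d - 1)).card := Finset.card_biUnion_le
      _ = ∑ _i : Fin (2*p+1), (b - p*d - 1) := by
          apply Finset.sum_congr rfl
          intro i _
          exact famset_card _ _ _ (by omega)
      _ = (2*p+1) * (b - p*d - 1) := by
          rw [Finset.sum_const, Finset.card_univ, Fintype.card_fin, smul_eq_mul]
  -- numeric contradiction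
  obtain ⟨c0, hc0⟩ : ∃ c0, b - p*d - 1 = c0 := ⟨_, rfl⟩
  have hbval : b = p*d + 1 + c0 := by omega
  have hkey : ((2*p+1)*d + 2) * p + (2*p+1) * c0 + 1 = (2*p+1) * (p*d + 1 + c0) := by ring
  rw [hc0] at hEsum
  rw [hbval] at hcount
  have hfin : (2*p+1) * (p*d+1+c0) ≤ ((2*p+1)*d + 2) * p + (2*p+1) * c0 := by
    calc (2*p+1) * (p*d+1+c0) ≤ ∑ x ∈ K ∪ E, (if x ∈ K then p else 1) := hcount
      _ ≤ _ := le_trans hsplit (by omega)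
  omega

/-! ### Assembly -/

lemma B2int' (p b d : ℕ) (hp : 1 ≤ p) (hσ : p*d + 1 ≤ b) {u v : Fin (2*p+1)}
    (huv : (cycleGraph (2*p+1)).Adj u v) :
    (B2L p b d u ∩ B2L p b d v).card ≤ b + (p+1)*d + 1 := by
  haveI : NeZero (2*p+1) := ⟨by omega⟩
  rcases (cycle_adj_iff (by omega)).1 huv with h | h
  · rw [h, Finset.inter_comm]
    exact B2int p b d hp hσ v
  · rw [h]
    exact B2int p b d hp hσ u

lemma choosable_of_succ (p a b c : ℕ) (hp : 1 ≤ p)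
    (H : ∀ L : Fin (2*p+1) → Finset ℕ, (∀ v, (L v).card = a) →
      (∀ v : Fin (2*p+1), (L v ∩ L (v+1)).card ≤ c) →
      ∃ φ : Fin (2*p+1) → Finset ℕ, (∀ v, φ v ⊆ L v ∧ (φ v).card = b) ∧
        ∀ v : Fin (2*p+1), φ v ∩ φ (v+1) = ∅) :
    Choosable (cycleGraph (2*p+1)) a b c := by
  haveI : NeZero (2*p+1) := ⟨by omega⟩
  intro L h1 h2
  obtain ⟨φ, hφ1, hφ2⟩ := H L h1 (fun v => h2 v (v+1) (cycle_adj_succ (by omega) v))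
  refine ⟨φ, hφ1, fun u w huw => ?_⟩
  rcases (cycle_adj_iff (by omega)).1 huw with h | h
  · rw [h, Finset.inter_comm]
    exact hφ2 w
  · rw [h]
    exact hφ2 u

lemma not_choosable_B1 (p a b : ℕ) (hp : 1 ≤ p) (hb : 1 ≤ b) (hba : b ≤ a) (hab : a < 2*b) :
    ¬ Choosable (cycleGraph (2*p+1)) a b (a-b+1) := by
  haveI : NeZero (2*p+1) := ⟨by omega⟩
  intro H
  obtain ⟨φ, hφ1, hφ2⟩ := H (B1L p a b) (B1card p a b hp hb hba)
    (fun u v huv => B1int' p a b hp hb hba huv)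
  exact B1main p a b hp hb hba hab φ hφ1 (fun v => hφ2 v (v+1) (cycle_adj_succ (by omega) v))

lemma not_choosable_B2 (p b d : ℕ) (hp : 1 ≤ p) (hσ : p*d + 1 ≤ b) :
    ¬ Choosable (cycleGraph (2*p+1)) (2*b+d) b (b + (p+1)*d + 1) := by
  haveI : NeZero (2*p+1) := ⟨by omega⟩
  intro H
  obtain ⟨φ, hφ1, hφ2⟩ := H (B2L p b d) (B2card p b d hp hσ)
    (fun u v huv => B2int' p b d hp hσ huv)
  exact B2main p b d hp hσ φ hφ1 (fun v => hφ2 v (v+1) (cycle_adj_succ (by omega) v))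

theorem sep_odd_cycle (p a b : ℕ) (hp : 1 ≤ p) (hb : 1 ≤ b) (hba : b ≤ a) :
    (a < 2 * b → sep (cycleGraph (2 * p + 1)) a b = a - b) ∧
    (2 * b ≤ a → p * (a - 2 * b) ≤ b →
      sep (cycleGraph (2 * p + 1)) a b = b + (p + 1) * (a - 2 * b)) ∧
    ((2 * p + 1) * b ≤ p * a → sep (cycleGraph (2 * p + 1)) a b = a) := by
  refine ⟨?_, ?_, ?_⟩
  · -- regime 1
    intro hab
    apply sep_eq_of _ _ _ _ (show a - b ≤ a by omega)
    · apply choosable_of_succ p a b (a-b) hp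
      intro L h1 h2
      exact colorable_easy a b (a-b) (by omega) L h1 h2
    · intro c hca hcc
      by_contra hgt
      push_neg at hgt
      exact not_choosable_B1 p a b hp hb hba hab (choosable_anti (by omega) hcc)
  · -- regime 2
    intro h2b hpd
    have hd : (p+1)*(a-2*b) = p*(a-2*b) + (a-2*b) := by ring
    apply sep_eq_of _ _ _ _ (show b + (p+1)*(a-2*b) ≤ a by omega)
    · apply choosable_of_succ p a b _ hp
      intro L h1 h2
      obtain ⟨φ, hφ1, hφ2⟩ := colorable_main p b (a-2*b) hp L
        (fun v => by rw [h1 v]; omega) h2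
      exact ⟨φ, hφ1, hφ2⟩
    · intro c hca hcc
      by_contra hgt
      push_neg at hgt
      obtain ⟨d0, hd0⟩ : ∃ d0, a - 2*b = d0 := ⟨_, rfl⟩
      rw [hd0] at hgt hpd
      have ha : a = 2*b + d0 := by omega
      have hσ : p*d0 + 1 ≤ b := by
        have he : (p+1)*d0 = p*d0 + d0 := by ring
        omega
      have hch : Choosable (cycleGraph (2*p+1)) (2*b+d0) b (b + (p+1)*d0 + 1) := by
        rw [← ha]
        exact choosable_anti (by omega) hcc
      exact not_choosable_B2 p b d0 hp hσ hch
  · -- regime 3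
    intro h3
    have h2b : 2*b ≤ a := by
      by_contra hcon
      push_neg at hcon
      obtain ⟨q, hq⟩ : ∃ q, b - 1 = q := ⟨_, rfl⟩
      have hb' : b = q + 1 := by omega
      have h4 : p*a ≤ p*(2*q+1) := Nat.mul_le_mul_left p (by omega)
      rw [hb'] at h3
      have key : p*(2*q+1) + p + q + 1 = (2*p+1)*(q+1) := by ring
      omega
    have hpd : b ≤ p*(a-2*b) := by
      have e1 : p*(a-2*b) + p*(2*b) = p*a := by
        rw [← Nat.mul_add]
        congr 1
        omega
      have e2 : p*(2*b) + b = (2*p+1)*b := by ring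
      omega
    have hle : a ≤ b + (p+1)*(a-2*b) := by
      have hd : (p+1)*(a-2*b) = p*(a-2*b) + (a-2*b) := by ring
      omega
    apply sep_eq_of _ _ _ a (le_refl a)
    · apply choosable_of_succ p a b a hp
      intro L h1 h2
      obtain ⟨φ, hφ1, hφ2⟩ := colorable_main p b (a-2*b) hp L
        (fun v => by rw [h1 v]; omega)
        (fun v => le_trans (h2 v) hle)
      exact ⟨φ, hφ1, hφ2⟩
    · intro c hca _
      exact hca
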